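/- arXiv:2411.15829 — 8 statements merged into one kernel-verified Lean document; each statement's English description precedes it below -/
import Mathlib

section
/- The twelve functions t1, t2, t3, t4, s11, s22, s33, s44, s12, s23, s34, s14 on quadruples of 2×2 complex matrices are algebraically independent over ℂ; equivalently, the ℂ-subalgebra R of Maps(M2(ℂ)^4, ℂ) that they generate is a polynomial ring in these twelve generators. -/
set_option maxHeartbeats 1000000

/-- The 2×2 complex matrices. -/
abbrev M2 : Type := Matrix (Fin 2) (Fin 2) ℂ

/-- The traceless part `[[y]] = y - (1/2)·tr(y)·I` of a 2×2 complex matrix. -/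
noncomputable def tl (y : M2) : M2 := y - (Matrix.trace y / 2) • (1 : M2)

/-- The function `t_i` on quadruples of 2×2 matrices: `x ↦ tr(x_i)`.
(Indices are 0-based: `tfun 0` is `t₁`, ..., `tfun 3` is `t₄`.) -/
noncomputable def tfun (i : Fin 4) : (Fin 4 → M2) → ℂ := fun x => Matrix.trace (x i)

/-- The function `s_{ij}` on quadruples of 2×2 matrices: `x ↦ tr([[x_i]]·[[x_j]])`. -/
noncomputable def sfun (i j : Fin 4) : (Fin 4 → M2) → ℂ :=
  fun x => Matrix.trace (tl (x i) * tl (x j))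

lemma trace_tl_mul (y z : M2) :
    Matrix.trace (tl y * tl z)
      = Matrix.trace (y * z) - Matrix.trace y * Matrix.trace z / 2 := by
  simp only [tl, Matrix.sub_mul, Matrix.mul_sub, Matrix.smul_mul, Matrix.mul_smul,
    Matrix.one_mul, Matrix.mul_one, Matrix.trace_sub, Matrix.trace_smul, Matrix.trace_one,
    smul_smul, smul_eq_mul, Fintype.card_fin, Nat.cast_ofNat]
  ring

/-- A family of functions with a pointwise section is algebraically independent. -/
lemma indep_of_section {n : ℕ} {S : Type} (f : Fin n → (S → ℂ))
    (h : ∀ c : Fin n → ℂ, ∃ x : S, ∀ i, f i x = c i) :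
    AlgebraicIndependent ℂ f := by
  rw [algebraicIndependent_iff]
  intro p hp
  have key : ∀ c : Fin n → ℂ, MvPolynomial.eval c p
      = MvPolynomial.eval c (0 : MvPolynomial (Fin n) ℂ) := by
    intro c
    obtain ⟨x, hx⟩ := h c
    have h1 : (Pi.evalAlgHom ℂ (fun _ : S => ℂ) x).comp (MvPolynomial.aeval f)
        = MvPolynomial.aeval (fun i => f i x) := MvPolynomial.comp_aeval f _
    have h2 : MvPolynomial.aeval (fun i => f i x) p = 0 := by
      rw [← h1]
      simp [hp]
    have h3 : (fun i => f i x) = c := funext hx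
    rw [h3] at h2
    have h4 : MvPolynomial.aeval c p = MvPolynomial.eval c p := by
      rw [← MvPolynomial.coe_aeval_eq_eval]; rfl
    rw [← h4, h2]
    simp
  exact MvPolynomial.funext key

lemma exists_pair (v1 p3 q3 s s' : ℂ) (hd : v1 * p3 - q3 ≠ 0) :
    ∃ p q : ℂ, q + p * v1 = s ∧ p * q3 + p3 * q = s' := by
  have hd' : p3 * v1 - q3 ≠ 0 := by rwa [mul_comm]
  refine ⟨(p3 * s - s') / (v1 * p3 - q3), (v1 * s' - q3 * s) / (v1 * p3 - q3), ?_, ?_⟩ <;>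
    field_simp <;> ring

lemma exists_dir (v1 s : ℂ) : ∃ p q : ℂ, 2 * (p * q) = s ∧ v1 * p - q ≠ 0 := by
  by_cases h : s = 2 * v1
  · by_cases h0 : v1 = 0
    · exact ⟨0, 1, by simp [h, h0], by simp⟩
    · refine ⟨2, v1 / 2, by rw [h]; ring, fun hc => h0 ?_⟩
      have h3 : (3 : ℂ) * v1 = 0 := by linear_combination 2 * hc
      rcases mul_eq_zero.1 h3 with h' | h'
      · norm_num at h'
      · exact h'
  · refine ⟨1, s / 2, by ring, fun hc => h ?_⟩
    linear_combination -2 * hc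

lemma exists_sqrt (z : ℂ) : ∃ w : ℂ, w ^ 2 = z :=
  IsAlgClosed.exists_pow_nat_eq z (n := 2) (by norm_num)

/-- The twelve functions t₁, t₂, t₃, t₄, s₁₁, s₂₂, s₃₃, s₄₄, s₁₂, s₂₃, s₃₄, s₁₄
are algebraically independent over ℂ. -/
theorem stmt_0 :
    AlgebraicIndependent ℂ
      (![tfun 0, tfun 1, tfun 2, tfun 3,
         sfun 0 0, sfun 1 1, sfun 2 2, sfun 3 3,
         sfun 0 1, sfun 1 2, sfun 2 3, sfun 0 3] : Fin 12 → ((Fin 4 → M2) → ℂ)) := by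
  apply indep_of_section
  intro c
  obtain ⟨p3, q3, h33, hd⟩ := exists_dir (c 4 / 2) (c 6)
  obtain ⟨p2, q2, h12, h23⟩ := exists_pair (c 4 / 2) p3 q3 (c 8) (c 9) hd
  obtain ⟨p4, q4, h14, h34⟩ := exists_pair (c 4 / 2) p3 q3 (c 11) (c 10) hd
  obtain ⟨u2, hu2⟩ := exists_sqrt (c 5 / 2 - p2 * q2)
  obtain ⟨u4, hu4⟩ := exists_sqrt (c 7 / 2 - p4 * q4)
  set X1 : M2 := !![c 0 / 2, 1; c 4 / 2, c 0 / 2] with hX1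
  set X2 : M2 := !![c 1 / 2 + u2, p2; q2, c 1 / 2 - u2] with hX2
  set X3 : M2 := !![c 2 / 2, p3; q3, c 2 / 2] with hX3
  set X4 : M2 := !![c 3 / 2 + u4, p4; q4, c 3 / 2 - u4] with hX4
  refine ⟨![X1, X2, X3, X4], ?_⟩
  intro i
  fin_cases i
  · show Matrix.trace X1 = c 0
    rw [hX1, Matrix.trace_fin_two_of]; ring
  · show Matrix.trace X2 = c 1
    rw [hX2, Matrix.trace_fin_two_of]; ring
  · show Matrix.trace X3 = c 2
    rw [hX3, Matrix.trace_fin_two_of]; ring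
  · show Matrix.trace X4 = c 3
    rw [hX4, Matrix.trace_fin_two_of]; ring
  · show Matrix.trace (tl X1 * tl X1) = c 4
    rw [trace_tl_mul, hX1, Matrix.mul_fin_two, Matrix.trace_fin_two_of,
      Matrix.trace_fin_two_of]
    ring
  · show Matrix.trace (tl X2 * tl X2) = c 5
    rw [trace_tl_mul, hX2, Matrix.mul_fin_two, Matrix.trace_fin_two_of,
      Matrix.trace_fin_two_of]
    linear_combination 2 * hu2
  · show Matrix.trace (tl X3 * tl X3) = c 6
    rw [trace_tl_mul, hX3, Matrix.mul_fin_two, Matrix.trace_fin_two_of,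
      Matrix.trace_fin_two_of]
    linear_combination h33
  · show Matrix.trace (tl X4 * tl X4) = c 7
    rw [trace_tl_mul, hX4, Matrix.mul_fin_two, Matrix.trace_fin_two_of,
      Matrix.trace_fin_two_of]
    linear_combination 2 * hu4
  · show Matrix.trace (tl X1 * tl X2) = c 8
    rw [trace_tl_mul, hX1, hX2, Matrix.mul_fin_two, Matrix.trace_fin_two_of,
      Matrix.trace_fin_two_of, Matrix.trace_fin_two_of]
    linear_combination h12
  · show Matrix.trace (tl X2 * tl X3) = c 9
    rw [trace_tl_mul, hX2, hX3, Matrix.mul_fin_two, Matrix.trace_fin_two_of,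
      Matrix.trace_fin_two_of, Matrix.trace_fin_two_of]
    linear_combination h23
  · show Matrix.trace (tl X3 * tl X4) = c 10
    rw [trace_tl_mul, hX3, hX4, Matrix.mul_fin_two, Matrix.trace_fin_two_of,
      Matrix.trace_fin_two_of, Matrix.trace_fin_two_of]
    linear_combination h34
  · show Matrix.trace (tl X1 * tl X4) = c 11
    rw [trace_tl_mul, hX1, hX4, Matrix.mul_fin_two, Matrix.trace_fin_two_of,
      Matrix.trace_fin_two_of, Matrix.trace_fin_two_of]
    linear_combination h14
end

section
/- The eight functions t1, t2, t3, t4, t12, t23, t34, t14 on quadruples of elements of SL(2,ℂ) are algebraically independent over ℂ; equivalently, the ℂ-subalgebra Q of Maps(SL(2,ℂ)^4, ℂ) that they generate is a polynomial ring in these eight generators. -/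
/-- The group SL(2,ℂ). -/
abbrev SL2 : Type := Matrix.SpecialLinearGroup (Fin 2) ℂ

/-- The trace function `t_i` on quadruples in SL(2,ℂ): `ρ ↦ tr(ρ_i)`.
(Indices are 0-based: `tr1 0` is `t₁`, ..., `tr1 3` is `t₄`.) -/
noncomputable def tr1 (i : Fin 4) : (Fin 4 → SL2) → ℂ :=
  fun ρ => Matrix.trace (ρ i : M2)

/-- The trace function `t_{ij}` on quadruples in SL(2,ℂ): `ρ ↦ tr(ρ_i·ρ_j)`. -/
noncomputable def tr2 (i j : Fin 4) : (Fin 4 → SL2) → ℂ :=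
  fun ρ => Matrix.trace ((ρ i : M2) * (ρ j : M2))

/-- The trace function `t_{ijk}` on quadruples in SL(2,ℂ): `ρ ↦ tr(ρ_i·ρ_j·ρ_k)`. -/
noncomputable def tr3 (i j k : Fin 4) : (Fin 4 → SL2) → ℂ :=
  fun ρ => Matrix.trace ((ρ i : M2) * (ρ j : M2) * (ρ k : M2))

/-- The trace function `t₁₂₃₄` on quadruples in SL(2,ℂ): `ρ ↦ tr(ρ₁·ρ₂·ρ₃·ρ₄)`. -/
noncomputable def tr4 : (Fin 4 → SL2) → ℂ :=
  fun ρ => Matrix.trace ((ρ 0 : M2) * (ρ 1 : M2) * (ρ 2 : M2) * (ρ 3 : M2))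

lemma quad_root (a b c : ℂ) (ha : a ≠ 0) : ∃ x : ℂ, a*x^2 + b*x + c = 0 := by
  obtain ⟨x, hx⟩ := IsAlgClosed.exists_root
    (Polynomial.C a * Polynomial.X^2 + Polynomial.C b * Polynomial.X + Polynomial.C c)
    (by rw [Polynomial.degree_quadratic ha]; exact (by decide : (2 : WithBot ℕ) ≠ 0))
  refine ⟨x, ?_⟩
  simpa using hx

lemma quad_aux (f : ℂ → ℂ) (a : ℂ) (ha : a ≠ 0)
    (hf : ∀ x, f x = a*x^2 + (f 1 - a - f 0)*x + f 0) : ∃ x, f x = 0 := by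
  obtain ⟨x, hx⟩ := quad_root a (f 1 - a - f 0) (f 0) ha
  exact ⟨x, by rw [hf x]; exact hx⟩

lemma avoid (p q : ℂ) : ∃ s : ℂ, s ≠ 2 ∧ s ≠ -2 ∧ s^2 + p*q*s + (p^2+q^2-4) ≠ 0 := by
  set g : Polynomial ℂ := Polynomial.C 1 * Polynomial.X^2 + Polynomial.C (p*q) * Polynomial.X
    + Polynomial.C (p^2+q^2-4) with hg
  have hg0 : g ≠ 0 := by
    intro h
    have := Polynomial.degree_quadratic (one_ne_zero (α := ℂ))
      (b := p*q) (c := p^2+q^2-4)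
    rw [← hg, h, Polynomial.degree_zero] at this
    exact absurd this (by decide)
  have hfin : Set.Finite ({2, -2} ∪ {x : ℂ | g.IsRoot x}) :=
    Set.Finite.union (by simp) (Polynomial.finite_setOf_isRoot hg0)
  obtain ⟨s, hs⟩ := (Set.Finite.infinite_compl hfin).nonempty
  simp only [Set.mem_compl_iff, Set.mem_union, Set.mem_insert_iff, Set.mem_singleton_iff,
    Set.mem_setOf_eq, not_or] at hs
  refine ⟨s, hs.1.1, hs.1.2, ?_⟩
  have := hs.2
  rw [Polynomial.IsRoot] at this
  simp only [hg, Polynomial.eval_add, Polynomial.eval_mul, Polynomial.eval_pow,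
    Polynomial.eval_C, Polynomial.eval_X, one_mul] at this
  intro h
  exact this (by linear_combination h)

lemma surj (v : Fin 8 → ℂ) : ∃ ρ : Fin 4 → SL2,
    tr1 0 ρ = v 0 ∧ tr1 1 ρ = v 1 ∧ tr1 2 ρ = v 2 ∧ tr1 3 ρ = v 3 ∧
    tr2 0 1 ρ = v 4 ∧ tr2 1 2 ρ = v 5 ∧ tr2 2 3 ρ = v 6 ∧ tr2 0 3 ρ = v 7 := by
  obtain ⟨s, hs2, hs2', hsN⟩ := avoid (v 0) (v 2)
  set p := v 0
  set q := v 2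
  obtain ⟨l, hl⟩ := quad_root 1 (-s) 1 one_ne_zero
  have hl' : l^2 - s*l + 1 = 0 := by linear_combination hl
  have hK : 2*l - s ≠ 0 := by
    intro h
    have h3 : l^2 = 1 := by linear_combination -hl' + l*h
    have h4 : (s - 2)*(s + 2) = 0 := by linear_combination 4*h3 + (-(2*l) - s)*h
    rcases mul_eq_zero.mp h4 with h5 | h5
    · exact hs2 (by linear_combination h5)
    · exact hs2' (by linear_combination h5)
  have ha : -((2*l-s)^2 + (q+l*p)*(q+(s-l)*p)) ≠ 0 := by
    intro h
    exact hsN (by linear_combination -h - (4 - p^2)*hl')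
  obtain ⟨x, hx⟩ := quad_aux
    (fun x => (2*l-s)^2 * (x*(v 1 - x) - 1) -
      ((v 5 - (v 1)*q + q*x) - l*(v 4 - p*x)) * ((v 5 - (v 1)*q + q*x) - (s-l)*(v 4 - p*x)))
    (-((2*l-s)^2 + (q+l*p)*(q+(s-l)*p))) ha (fun x => by ring)
  obtain ⟨u, hu⟩ := quad_aux
    (fun u => (2*l-s)^2 * (u*(v 3 - u) - 1) -
      ((v 6 - (v 3)*q + q*u) - l*(v 7 - p*u)) * ((v 6 - (v 3)*q + q*u) - (s-l)*(v 7 - p*u)))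
    (-((2*l-s)^2 + (q+l*p)*(q+(s-l)*p))) ha (fun u => by ring)
  set b := ((v 5 - (v 1)*q + q*x) - l*(v 4 - p*x))/(2*l-s) with hb
  set c := ((v 5 - (v 1)*q + q*x) - (s-l)*(v 4 - p*x))/(2*l-s) with hc
  set e := ((v 6 - (v 3)*q + q*u) - l*(v 7 - p*u))/(2*l-s) with he
  set f := ((v 6 - (v 3)*q + q*u) - (s-l)*(v 7 - p*u))/(2*l-s) with hf
  have d1 : Matrix.det !![p, 1; -1, 0] = 1 := by
    rw [Matrix.det_fin_two_of]; ring
  have d2 : Matrix.det !![x, b; c, v 1 - x] = 1 := by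
    rw [Matrix.det_fin_two_of, hb, hc]
    field_simp [show l * 2 - s ≠ 0 from by rwa [mul_comm]]
    linear_combination hx
  have d3 : Matrix.det !![0, l; -(s-l), q] = 1 := by
    rw [Matrix.det_fin_two_of]
    linear_combination -hl'
  have d4 : Matrix.det !![u, e; f, v 3 - u] = 1 := by
    rw [Matrix.det_fin_two_of, he, hf]
    field_simp [show l * 2 - s ≠ 0 from by rwa [mul_comm]]
    linear_combination hu
  have T1 : Matrix.trace !![p, 1; -1, 0] = v 0 := by
    rw [Matrix.trace_fin_two_of]; ring
  have T2 : Matrix.trace !![x, b; c, v 1 - x] = v 1 := by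
    rw [Matrix.trace_fin_two_of]; ring
  have T3 : Matrix.trace !![0, l; -(s-l), q] = v 2 := by
    rw [Matrix.trace_fin_two_of]; ring
  have T4 : Matrix.trace !![u, e; f, v 3 - u] = v 3 := by
    rw [Matrix.trace_fin_two_of]; ring
  have T12 : Matrix.trace (!![p, 1; -1, 0] * !![x, b; c, v 1 - x]) = v 4 := by
    rw [show !![p, 1; -1, 0] * !![x, b; c, v 1 - x] =
      !![p*x + c, p*b + (v 1 - x); -x, -b] from by
        rw [Matrix.mul_fin_two]; congr 1 <;> ring]
    rw [Matrix.trace_fin_two_of, hb, hc]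
    field_simp [show l * 2 - s ≠ 0 from by rwa [mul_comm]]
    ring
  have T23 : Matrix.trace (!![x, b; c, v 1 - x] * !![0, l; -(s-l), q]) = v 5 := by
    rw [show !![x, b; c, v 1 - x] * !![0, l; -(s-l), q] =
      !![-b*(s-l), x*l + b*q; -(v 1 - x)*(s-l), c*l + (v 1 - x)*q] from by
        rw [Matrix.mul_fin_two]; congr 1 <;> ring]
    rw [Matrix.trace_fin_two_of, hb, hc]
    field_simp [show l * 2 - s ≠ 0 from by rwa [mul_comm]]
    ring
  have T34 : Matrix.trace (!![0, l; -(s-l), q] * !![u, e; f, v 3 - u]) = v 6 := by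
    rw [show !![0, l; -(s-l), q] * !![u, e; f, v 3 - u] =
      !![l*f, l*(v 3 - u); -(s-l)*u + q*f, -(s-l)*e + q*(v 3 - u)] from by
        rw [Matrix.mul_fin_two]; congr 1 <;> ring]
    rw [Matrix.trace_fin_two_of, he, hf]
    field_simp [show l * 2 - s ≠ 0 from by rwa [mul_comm]]
    ring
  have T14 : Matrix.trace (!![p, 1; -1, 0] * !![u, e; f, v 3 - u]) = v 7 := by
    rw [show !![p, 1; -1, 0] * !![u, e; f, v 3 - u] =
      !![p*u + f, p*e + (v 3 - u); -u, -e] from by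
        rw [Matrix.mul_fin_two]; congr 1 <;> ring]
    rw [Matrix.trace_fin_two_of, he, hf]
    field_simp [show l * 2 - s ≠ 0 from by rwa [mul_comm]]
    ring
  refine ⟨![⟨!![p, 1; -1, 0], d1⟩, ⟨!![x, b; c, v 1 - x], d2⟩,
    ⟨!![0, l; -(s-l), q], d3⟩, ⟨!![u, e; f, v 3 - u], d4⟩], ?_, ?_, ?_, ?_, ?_, ?_, ?_, ?_⟩ <;>
    simp only [tr1, tr2, Matrix.cons_val_zero, Matrix.cons_val_one, Matrix.head_cons,
      Matrix.cons_val_two, Matrix.cons_val_three, Matrix.tail_cons,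
      Matrix.SpecialLinearGroup.coe_mk]
  · exact T1
  · exact T2
  · exact T3
  · exact T4
  · exact T12
  · exact T23
  · exact T34
  · exact T14


/-- The eight functions t₁, t₂, t₃, t₄, t₁₂, t₂₃, t₃₄, t₁₄ on quadruples of elements of
SL(2,ℂ) are algebraically independent over ℂ. -/
theorem stmt_4 :
    AlgebraicIndependent ℂ
      (![tr1 0, tr1 1, tr1 2, tr1 3,
         tr2 0 1, tr2 1 2, tr2 2 3, tr2 0 3] : Fin 8 → ((Fin 4 → SL2) → ℂ)) := by
  set F : Fin 8 → ((Fin 4 → SL2) → ℂ) :=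
    ![tr1 0, tr1 1, tr1 2, tr1 3, tr2 0 1, tr2 1 2, tr2 2 3, tr2 0 3] with hF
  rw [algebraicIndependent_iff]
  intro P hP
  have key : ∀ v : Fin 8 → ℂ, MvPolynomial.eval v P = 0 := by
    intro v
    obtain ⟨ρ, h0, h1, h2, h3, h4, h5, h6, h7⟩ := surj v
    have hFv : ∀ k : Fin 8, F k ρ = v k := by
      intro k
      fin_cases k <;>
        simp only [hF, Matrix.cons_val_zero, Matrix.cons_val_one, Matrix.head_cons,
          Matrix.cons_val_two, Matrix.cons_val_three, Matrix.tail_cons, Fin.mk_zero, Fin.mk_one] <;>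
        first
          | exact h0 | exact h1 | exact h2 | exact h3
          | exact h4 | exact h5 | exact h6 | exact h7
    have hhom : (Pi.evalAlgHom ℂ (fun _ : (Fin 4 → SL2) => ℂ) ρ).comp
        (MvPolynomial.aeval F) = MvPolynomial.aeval v := by
      apply MvPolynomial.algHom_ext
      intro k
      simp [hFv k]
    have h1 : (MvPolynomial.aeval v) P = 0 := by
      rw [← hhom]
      simp [hP]
    rw [← MvPolynomial.coe_aeval_eq_eval]
    exact h1
  have := MvPolynomial.funext (p := P) (q := 0) (by simpa using key)
  exact this
end

section
/- Let R = ℤ[x, x^{-1}] be the Laurent polynomial ring over ℤ in one variable x, and let φ : R → ℂ be the ring homomorphism determined by φ(x) = −1. Let M be a torsion-free R-module, V a ℂ-vector space, and f : M → V an additive map satisfying f(r·m) = φ(r)·f(m) for all r ∈ R and m ∈ M. If a family B of elements of M generates M as an R-module and the family (f(b))_{b ∈ B} is linearly independent over ℂ, then B is linearly independent over R; hence B is a basis of M as an R-module. -/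
open LaurentPolynomial Polynomial

lemma aux_ker (φ : LaurentPolynomial ℤ →+* ℂ) (hφ : φ (T 1) = -1)
    (c : LaurentPolynomial ℤ) (hc : φ c = 0) : (T 1 + 1) ∣ c := by
  obtain ⟨n, p, hp⟩ := exists_T_pow c
  have h1 : φ (toLaurent p) = 0 := by rw [hp, map_mul, hc, zero_mul]
  have hψ : φ.comp (toLaurent : ℤ[X] →+* LaurentPolynomial ℤ)
      = Polynomial.eval₂RingHom (Int.castRingHom ℂ) (-1) := by
    apply Polynomial.ringHom_ext'
    · ext1 z; simp
    · simp [hφ]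
  have hev : ((p.eval (-1 : ℤ) : ℤ) : ℂ) = 0 := by
    have := congrArg (fun ψ => ψ p) hψ
    simp only [RingHom.comp_apply, coe_eval₂RingHom] at this
    rw [this] at h1
    rwa [show ((-1 : ℂ)) = (Int.castRingHom ℂ) (-1) by simp,
      Polynomial.eval₂_at_apply] at h1
  have hev' : p.eval (-1 : ℤ) = 0 := by exact_mod_cast hev
  have hd : (X - Polynomial.C (-1 : ℤ)) ∣ p := (Polynomial.dvd_iff_isRoot).mpr hev'
  have hd2 : (T 1 + 1 : LaurentPolynomial ℤ) ∣ toLaurent p := by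
    have : toLaurent (X - Polynomial.C (-1 : ℤ)) = T 1 + 1 := by simp [sub_neg_eq_add]
    rw [← this]
    exact map_dvd _ hd
  rw [hp] at hd2
  exact (IsUnit.dvd_mul_right (isUnit_T n)).mp hd2

lemma aux_zero (c : LaurentPolynomial ℤ) (h : ∀ n : ℕ, (T 1 + 1)^n ∣ c) : c = 0 := by
  by_contra hc
  obtain ⟨m, p, hp⟩ := exists_T_pow c
  have hp0 : p ≠ 0 := by
    intro h0
    rw [h0, map_zero] at hp
    exact hc ((isUnit_T (m:ℤ)).mul_left_eq_zero.mp hp.symm)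
  set n := p.natDegree + 1 with hn
  obtain ⟨g, hg⟩ : ((T 1 + 1 : LaurentPolynomial ℤ))^n ∣ toLaurent p := by
    rw [hp]; exact Dvd.dvd.mul_right (h n) _
  obtain ⟨k, q, hq⟩ := exists_T_pow g
  have heq : p * X^k = (X+1)^n * q := by
    apply toLaurent_injective
    have hT : toLaurent ((X + 1 : ℤ[X])) = T 1 + 1 := by simp
    calc toLaurent (p * X^k) = toLaurent p * T k := by simp [map_mul]
    _ = (T 1 + 1)^n * (g * T k) := by rw [hg]; ring
    _ = toLaurent ((X+1)^n * q) := by rw [← hq, map_mul, map_pow, hT]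
  have hc1 : IsCoprime (X+1 : ℤ[X]) X := ⟨1, -1, by ring⟩
  have hcop : IsCoprime ((X+1 : ℤ[X])^n) (X^k) := hc1.pow
  have hdvd : ((X+1 : ℤ[X]))^n ∣ p := hcop.dvd_of_dvd_mul_right ⟨q, heq⟩
  have hle := Polynomial.natDegree_le_of_dvd hdvd hp0
  rw [Polynomial.natDegree_pow] at hle
  have h1 : (X + 1 : ℤ[X]).natDegree = 1 := by
    simpa using Polynomial.natDegree_X_add_C (1 : ℤ)
  rw [h1] at hle
  omega
/-- Let `R = ℤ[x, x⁻¹]` be the Laurent polynomial ring over ℤ, `φ : R → ℂ` the ring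
homomorphism sending `x` to `−1`, `M` a torsion-free `R`-module, `V` a ℂ-vector space,
and `f : M → V` an additive map satisfying `f(r • m) = φ(r) • f(m)`. If a family `b`
generates `M` as an `R`-module and `(f (b i))ᵢ` is ℂ-linearly independent, then `b`
is `R`-linearly independent; hence `b` is a basis of `M` over `R`. -/
theorem stmt_7 {M V : Type*} [AddCommGroup M] [Module (LaurentPolynomial ℤ) M]
    [NoZeroSMulDivisors (LaurentPolynomial ℤ) M]
    [AddCommGroup V] [Module ℂ V]
    (φ : LaurentPolynomial ℤ →+* ℂ) (hφ : φ (LaurentPolynomial.T 1) = -1)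
    (f : M →+ V) (hf : ∀ (r : LaurentPolynomial ℤ) (m : M), f (r • m) = φ r • f m)
    {ι : Type*} (b : ι → M)
    (hgen : Submodule.span (LaurentPolynomial ℤ) (Set.range b) = ⊤)
    (hind : LinearIndependent ℂ fun i => f (b i)) :
    LinearIndependent (LaurentPolynomial ℤ) b ∧
      ∃ B : Module.Basis ι (LaurentPolynomial ℤ) M, ∀ i, B i = b i := by
  have hT1 : (T 1 + 1 : LaurentPolynomial ℤ) ≠ 0 := by
    have h : toLaurent ((X + 1 : ℤ[X])) = T 1 + 1 := by simp
    rw [← h, Ne, Polynomial.toLaurent_eq_zero]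
    intro h0
    simpa [Polynomial.coeff_one] using congrArg (fun p => Polynomial.coeff p 1) h0
  have key : ∀ (n : ℕ) (s : Finset ι) (g : ι → LaurentPolynomial ℤ),
      (∑ i ∈ s, g i • b i) = 0 → ∀ i ∈ s, (T 1 + 1)^n ∣ g i := by
    intro n
    induction n with
    | zero => intro s g _ i _; simp
    | succ n ih =>
      intro s g hsum i hi
      have hphi : ∀ j ∈ s, φ (g j) = 0 := by
        have h0 : ∑ j ∈ s, φ (g j) • f (b j) = 0 := by
          have := congrArg f hsum
          rw [map_sum, map_zero] at this
          simpa only [hf] using this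
        exact fun j hj => (linearIndependent_iff'.mp hind) s (fun j => φ (g j)) h0 j hj
      have hex : ∀ j, ∃ e : LaurentPolynomial ℤ, j ∈ s → g j = (T 1 + 1) * e := by
        intro j
        by_cases hj : j ∈ s
        · obtain ⟨e, he⟩ := aux_ker φ hφ (g j) (hphi j hj)
          exact ⟨e, fun _ => he⟩
        · exact ⟨0, fun h => absurd h hj⟩
      choose e he using hex
      have hsum2 : (∑ j ∈ s, e j • b j) = 0 := by
        have : (T 1 + 1 : LaurentPolynomial ℤ) • (∑ j ∈ s, e j • b j) = 0 := by
          rw [Finset.smul_sum, ← hsum]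
          exact (Finset.sum_congr rfl fun j hj => by rw [he j hj, mul_smul]).symm
        rcases smul_eq_zero.mp this with h | h
        · exact absurd h hT1
        · exact h
      obtain ⟨w, hw⟩ := ih s e hsum2 i hi
      exact ⟨w, by rw [he i hi, hw, pow_succ]; ring⟩
  have hli : LinearIndependent (LaurentPolynomial ℤ) b := by
    rw [linearIndependent_iff']
    intro s g hsum i hi
    exact aux_zero (g i) fun n => key n s g hsum i hi
  exact ⟨hli, ⟨Module.Basis.mk hli hgen.ge, fun i => Module.Basis.mk_apply hli hgen.ge i⟩⟩
end

section
/- For any four 2×2 complex matrices x1, x2, x3, x4, the determinant of the 4×4 matrix whose (i,j) entry is tr([[x_i]]·[[x_j]]) is zero (the relation θ^{1234}_{1234} = 0). -/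
lemma trace_tl_mul_tl (y z : M2) :
    Matrix.trace (tl y * tl z) =
      2 * ((y 0 0 - y 1 1) / 2) * ((z 0 0 - z 1 1) / 2)
        + y 0 1 * z 1 0 + y 1 0 * z 0 1 := by
  simp [tl, Matrix.trace, Matrix.mul_apply, Fin.sum_univ_succ, Matrix.one_apply,
    Matrix.sub_apply, Matrix.smul_apply]
  ring

theorem stmt_8 (x : Fin 4 → M2) :
    Matrix.det (Matrix.of fun i j : Fin 4 => Matrix.trace (tl (x i) * tl (x j))) = 0 := by
  set a : Fin 4 → ℂ := fun i => (x i 0 0 - x i 1 1) / 2 with ha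
  set b : Fin 4 → ℂ := fun i => x i 0 1 with hb
  set c : Fin 4 → ℂ := fun i => x i 1 0 with hc
  set A : Matrix (Fin 4) (Fin 3) ℂ := Matrix.of fun i k => ![a i, b i, c i] k with hA
  set B : Matrix (Fin 3) (Fin 4) ℂ := Matrix.of fun k j => ![2 * a j, c j, b j] k with hB
  have hfac : (Matrix.of fun i j : Fin 4 => Matrix.trace (tl (x i) * tl (x j))) = A * B := by
    ext i j
    rw [Matrix.mul_apply]
    simp only [Matrix.of_apply, hA, hB, Fin.sum_univ_succ, Fin.sum_univ_zero]
    rw [trace_tl_mul_tl]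
    simp [ha, hb, hc]
    ring
  by_contra hdet
  have hunit : IsUnit (A * B) := by
    rw [← hfac]
    exact (Matrix.isUnit_iff_isUnit_det _).2 (isUnit_iff_ne_zero.2 hdet)
  have h4 : (A * B).rank = 4 := by
    rw [Matrix.rank_of_isUnit _ hunit]; simp
  have h3 : (A * B).rank ≤ 3 := le_trans (Matrix.rank_mul_le_right A B) (by
    simpa using Matrix.rank_le_card_height B)
  omega
end

section
/- For any six 2×2 complex matrices y1, y2, y3, z1, z2, z3, one has the type I trace identity 2·tr([[y1]]·[[y2]]·[[y3]])·tr([[z1]]·[[z2]]·[[z3]]) + det(M) = 0, where M is the 3×3 matrix whose (i,j) entry is tr([[y_i]]·[[z_j]]). -/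
theorem stmt_9 (y₁ y₂ y₃ z₁ z₂ z₃ : M2) :
    2 * Matrix.trace (tl y₁ * tl y₂ * tl y₃) * Matrix.trace (tl z₁ * tl z₂ * tl z₃)
      + Matrix.det (Matrix.of fun i j : Fin 3 =>
          Matrix.trace (tl (![y₁, y₂, y₃] i) * tl (![z₁, z₂, z₃] j))) = 0 := by
  simp only [tl, Matrix.det_fin_three, Matrix.of_apply, Matrix.cons_val', Matrix.cons_val_zero,
    Matrix.cons_val_one, Matrix.cons_val_two, Matrix.head_cons, Matrix.head_fin_const, Matrix.empty_val',
    Matrix.cons_val_fin_one, Matrix.trace_fin_two, Matrix.mul_apply, Matrix.sub_apply,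
    Matrix.smul_apply, Matrix.one_apply, Fin.sum_univ_two, smul_eq_mul]
  norm_num
  ring
end

section
/- For any five 2×2 complex matrices b, c, a1, a2, a3, one has the type II trace identity s(b,c)·s(a1,a2,a3) − s(a1,c)·s(b,a2,a3) + s(a2,c)·s(b,a1,a3) − s(a3,c)·s(b,a1,a2) = 0. -/
/-- `s(y₁,y₂) = tr([[y₁]]·[[y₂]])`. -/
noncomputable def s2 (y₁ y₂ : M2) : ℂ := Matrix.trace (tl y₁ * tl y₂)

/-- `s(y₁,y₂,y₃) = tr([[y₁]]·[[y₂]]·[[y₃]])`. -/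
noncomputable def s3 (y₁ y₂ y₃ : M2) : ℂ := Matrix.trace (tl y₁ * tl y₂ * tl y₃)

theorem stmt_10 (b c a₁ a₂ a₃ : M2) :
    s2 b c * s3 a₁ a₂ a₃ - s2 a₁ c * s3 b a₂ a₃ + s2 a₂ c * s3 b a₁ a₃
      - s2 a₃ c * s3 b a₁ a₂ = 0 := by
  simp only [s2, s3, tl, Matrix.trace, Matrix.diag, Fin.sum_univ_two,
    Matrix.mul_apply, Matrix.sub_apply, Matrix.smul_apply, Matrix.one_apply,
    smul_eq_mul]
  norm_num
  ring
end

section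
/- For any seven 2×2 complex matrices b1, b2, c1, c2, a1, a2, a3, one has the trace identity θ(b1,b2;c1,c2)·s(a1,a2,a3) − θ(b1,a2;c1,c2)·s(a1,b2,a3) + θ(b1,a3;c1,c2)·s(a1,b2,a2) + θ(b2,a2;c1,c2)·s(a1,b1,a3) − θ(b2,a3;c1,c2)·s(a1,b1,a2) + θ(a2,a3;c1,c2)·s(a1,b1,b2) = 0, where θ(u,v;w,z) = s(u,w)·s(v,z) − s(u,z)·s(v,w). -/
/-- `θ(u,v;w,z) = s(u,w)·s(v,z) − s(u,z)·s(v,w)`. -/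
noncomputable def θ2 (u v w z : M2) : ℂ := s2 u w * s2 v z - s2 u z * s2 v w

lemma tl_apply (y : M2) (i j : Fin 2) :
    tl y i j = y i j - (y 0 0 + y 1 1) / 2 * (if i = j then 1 else 0) := by
  simp [tl, Matrix.trace, Matrix.sub_apply, Matrix.smul_apply, Matrix.one_apply,
    Fin.sum_univ_two, Matrix.diag, mul_ite, div_eq_mul_inv]

lemma s2_eq (x y : M2) :
    s2 x y = (x 0 0 - (x 0 0 + x 1 1)/2) * (y 0 0 - (y 0 0 + y 1 1)/2)
      + x 0 1 * y 1 0 + x 1 0 * y 0 1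
      + (x 1 1 - (x 0 0 + x 1 1)/2) * (y 1 1 - (y 0 0 + y 1 1)/2) := by
  simp [s2, Matrix.trace, Matrix.mul_apply, Fin.sum_univ_two, Matrix.diag, tl_apply]
  ring

lemma s3_eq (x y z : M2) :
    s3 x y z =
      ((x 0 0 - (x 0 0 + x 1 1)/2) * (y 0 0 - (y 0 0 + y 1 1)/2) + x 0 1 * y 1 0) * (z 0 0 - (z 0 0 + z 1 1)/2)
      + ((x 0 0 - (x 0 0 + x 1 1)/2) * y 0 1 + x 0 1 * (y 1 1 - (y 0 0 + y 1 1)/2)) * z 1 0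
      + (x 1 0 * (y 0 0 - (y 0 0 + y 1 1)/2) + (x 1 1 - (x 0 0 + x 1 1)/2) * y 1 0) * z 0 1
      + (x 1 0 * y 0 1 + (x 1 1 - (x 0 0 + x 1 1)/2) * (y 1 1 - (y 0 0 + y 1 1)/2)) * (z 1 1 - (z 0 0 + z 1 1)/2) := by
  simp [s3, Matrix.trace, Matrix.mul_apply, Fin.sum_univ_two, Matrix.diag, tl_apply]
  ring

theorem stmt_11 (b₁ b₂ c₁ c₂ a₁ a₂ a₃ : M2) :
    θ2 b₁ b₂ c₁ c₂ * s3 a₁ a₂ a₃ - θ2 b₁ a₂ c₁ c₂ * s3 a₁ b₂ a₃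
      + θ2 b₁ a₃ c₁ c₂ * s3 a₁ b₂ a₂ + θ2 b₂ a₂ c₁ c₂ * s3 a₁ b₁ a₃
      - θ2 b₂ a₃ c₁ c₂ * s3 a₁ b₁ a₂ + θ2 a₂ a₃ c₁ c₂ * s3 a₁ b₁ b₂ = 0 := by
  simp only [θ2, s2_eq, s3_eq]
  ring
end

section
/- For any nine 2×2 complex matrices b1, b2, b3, c1, c2, c3, a1, a2, a3, one has the trace identity θ(b1,b2,b3;c1,c2,c3)·s(a1,a2,a3) − θ(b1,b2,a3;c1,c2,c3)·s(a1,a2,b3) + θ(b1,b3,a3;c1,c2,c3)·s(a1,a2,b2) − θ(b2,b3,a3;c1,c2,c3)·s(a1,a2,b1) = 0, where θ(u1,u2,u3;w1,w2,w3) denotes the determinant of the 3×3 matrix whose (i,j) entry is s(u_i,w_j). -/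
/-- `θ(u₁,u₂,u₃;w₁,w₂,w₃)` is the determinant of the 3×3 matrix with entries `s(uᵢ,wⱼ)`. -/
noncomputable def θ3 (u₁ u₂ u₃ w₁ w₂ w₃ : M2) : ℂ :=
  Matrix.det (Matrix.of fun i j : Fin 3 => s2 (![u₁, u₂, u₃] i) (![w₁, w₂, w₃] j))

lemma det4_aux (A B : Fin 4 → Fin 3 → ℂ) :
    (Matrix.of fun i j : Fin 4 => ∑ k, A i k * B j k).det = 0 := by
  have h : (Matrix.of fun i j : Fin 4 => ∑ k, A i k * B j k)
      = (Matrix.of fun (i k : Fin 4) => if h : (k : ℕ) < 3 then A i ⟨k, h⟩ else 0)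
        * (Matrix.of fun (k j : Fin 4) => if h : (k : ℕ) < 3 then B j ⟨k, h⟩ else 0) := by
    ext i j
    simp [Matrix.mul_apply, Fin.sum_univ_four, Fin.sum_univ_three]
  rw [h, Matrix.det_mul]
  have h0 : (Matrix.of fun (i k : Fin 4) =>
      if h : (k : ℕ) < 3 then A i ⟨k, h⟩ else 0).det = 0 := by
    apply Matrix.det_eq_zero_of_column_eq_zero 3
    intro i
    simp only [Matrix.of_apply]
    rw [dif_neg (by decide)]
  rw [h0, zero_mul]

lemma det_fin_four' (A : Matrix (Fin 4) (Fin 4) ℂ) :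
    A.det =
      A 0 0 * (A 1 1 * A 2 2 * A 3 3 - A 1 1 * A 2 3 * A 3 2 - A 1 2 * A 2 1 * A 3 3
        + A 1 2 * A 2 3 * A 3 1 + A 1 3 * A 2 1 * A 3 2 - A 1 3 * A 2 2 * A 3 1)
      - A 0 1 * (A 1 0 * A 2 2 * A 3 3 - A 1 0 * A 2 3 * A 3 2 - A 1 2 * A 2 0 * A 3 3
        + A 1 2 * A 2 3 * A 3 0 + A 1 3 * A 2 0 * A 3 2 - A 1 3 * A 2 2 * A 3 0)
      + A 0 2 * (A 1 0 * A 2 1 * A 3 3 - A 1 0 * A 2 3 * A 3 1 - A 1 1 * A 2 0 * A 3 3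
        + A 1 1 * A 2 3 * A 3 0 + A 1 3 * A 2 0 * A 3 1 - A 1 3 * A 2 1 * A 3 0)
      - A 0 3 * (A 1 0 * A 2 1 * A 3 2 - A 1 0 * A 2 2 * A 3 1 - A 1 1 * A 2 0 * A 3 2
        + A 1 1 * A 2 2 * A 3 0 + A 1 2 * A 2 0 * A 3 1 - A 1 2 * A 2 1 * A 3 0) := by
  rw [Matrix.det_succ_row_zero, Fin.sum_univ_four]
  simp [Matrix.det_fin_three, Matrix.submatrix_apply, Fin.succAbove, Fin.lt_def,
    Fin.succ_zero_eq_one, Fin.succ_one_eq_two,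
    show (Fin.succ 2 : Fin 4) = 3 from rfl, show (Fin.castSucc 2 : Fin 4) = 2 from rfl,
    show ((3 : Fin 4) : ℕ) = 3 from rfl]
  ring

lemma tl11 (y : M2) : tl y 1 1 = - tl y 0 0 := by
  simp [tl, Matrix.trace_fin_two, Matrix.one_apply]
  ring

lemma s2_coords (y c : M2) :
    s2 y c = tl y 0 0 * (2 * tl c 0 0) + tl y 0 1 * tl c 1 0 + tl y 1 0 * tl c 0 1 := by
  simp [s2, Matrix.trace_fin_two, Matrix.mul_apply, Fin.sum_univ_two, tl11]
  ring

lemma s3_coords (a₁ a₂ x : M2) :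
    s3 a₁ a₂ x = tl x 0 0 * ((tl a₁ * tl a₂) 0 0 - (tl a₁ * tl a₂) 1 1)
      + tl x 0 1 * (tl a₁ * tl a₂) 1 0 + tl x 1 0 * (tl a₁ * tl a₂) 0 1 := by
  have h : s3 a₁ a₂ x = Matrix.trace ((tl a₁ * tl a₂) * tl x) := rfl
  rw [h, Matrix.trace_fin_two]
  simp only [Matrix.mul_apply, Fin.sum_univ_two, tl11 x]
  ring

theorem stmt_12 (b₁ b₂ b₃ c₁ c₂ c₃ a₁ a₂ a₃ : M2) :
    θ3 b₁ b₂ b₃ c₁ c₂ c₃ * s3 a₁ a₂ a₃ - θ3 b₁ b₂ a₃ c₁ c₂ c₃ * s3 a₁ a₂ b₃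
      + θ3 b₁ b₃ a₃ c₁ c₂ c₃ * s3 a₁ a₂ b₂ - θ3 b₂ b₃ a₃ c₁ c₂ c₃ * s3 a₁ a₂ b₁ = 0 := by
  have key := det4_aux
    ![![tl b₁ 0 0, tl b₁ 0 1, tl b₁ 1 0], ![tl b₂ 0 0, tl b₂ 0 1, tl b₂ 1 0],
      ![tl b₃ 0 0, tl b₃ 0 1, tl b₃ 1 0], ![tl a₃ 0 0, tl a₃ 0 1, tl a₃ 1 0]]
    ![![2 * tl c₁ 0 0, tl c₁ 1 0, tl c₁ 0 1], ![2 * tl c₂ 0 0, tl c₂ 1 0, tl c₂ 0 1],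
      ![2 * tl c₃ 0 0, tl c₃ 1 0, tl c₃ 0 1],
      ![(tl a₁ * tl a₂) 0 0 - (tl a₁ * tl a₂) 1 1, (tl a₁ * tl a₂) 1 0, (tl a₁ * tl a₂) 0 1]]
  rw [det_fin_four'] at key
  simp only [Matrix.of_apply, Fin.sum_univ_three, Matrix.cons_val_zero, Matrix.cons_val_one,
    Matrix.head_cons, Matrix.cons_val_two, Matrix.tail_cons, Matrix.cons_val_three,
    Matrix.head_fin_const] at key
  simp only [θ3, Matrix.det_fin_three, Matrix.of_apply, Matrix.cons_val_zero, Matrix.cons_val_one,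
    Matrix.head_cons, Matrix.cons_val_two, Matrix.tail_cons, s2_coords, s3_coords]
  linear_combination key
end
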